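/- Let t be a target distribution with finite or countably infinite support and let M be a positive integer. There exists an M-type distribution p minimizing ‖p − t‖₁ over all M-type distributions which additionally satisfies: for all indices i, j, if t_j < t_i and p_i = 0, then p_j = 0. -/

import Mathlib

/-- Variational distance `‖p − t‖₁ = Σ_i |p_i − t_i|`. -/
noncomputable def vd (p t : ℕ → ℝ) : ℝ := ∑' i, |p i - t i|

/-- A target distribution: a probability distribution on the positive integers
(indexed here by ℕ) with nonincreasing entries. -/
def IsTargetDist (t : ℕ → ℝ) : Prop :=
  (∀ i, 0 ≤ t i) ∧ (∀ i, t (i + 1) ≤ t i) ∧ HasSum t 1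

/-- An `M`-type distribution: every entry is `c_i / M` for a nonnegative integer
`c_i ≤ M`, and the entries sum to one. -/
def IsMType (M : ℕ) (p : ℕ → ℝ) : Prop :=
  HasSum p 1 ∧ ∃ c : ℕ → ℕ, (∀ i, c i ≤ M) ∧ ∀ i, p i = (c i : ℝ) / M

lemma sum_pair_split {β : Type*} [AddCommMonoid β] (f : ℕ → β) (s : Finset ℕ) {i j : ℕ}
    (hi : i ∈ s) (hj : j ∈ s) (hij : i ≠ j) :
    ∑ k ∈ s, f k = f i + f j + ∑ k ∈ (s.erase i).erase j, f k := by
  rw [add_assoc, Finset.add_sum_erase _ f (Finset.mem_erase.mpr ⟨hij.symm, hj⟩),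
    Finset.add_sum_erase _ f hi]

lemma tsum_pair_split (f : ℕ → ℝ) (hf : Summable f) {i j : ℕ} (hij : i ≠ j) :
    ∑' k, f k = f i + f j + ∑' k, if k = i ∨ k = j then 0 else f k := by
  have hupd : Summable (fun k => if k = i then 0 else f k) := by
    have h := hf.update i 0
    exact h.congr fun k => by rw [Function.update_apply]
  have h1 := Summable.tsum_eq_add_tsum_ite hf i
  have h2 := Summable.tsum_eq_add_tsum_ite hupd j
  rw [h1, h2, if_neg hij.symm, ← add_assoc]
  congr 1
  apply tsum_congr
  intro k
  by_cases hki : k = i <;> by_cases hkj : k = j <;> simp [hki, hkj]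

lemma abs_swap_ineq {a b x : ℝ} (hb : 0 ≤ b) (hba : b ≤ a) (hx : 0 ≤ x) :
    |x - a| + b ≤ a + |x - b| := by
  rcases abs_cases (x - a) with ⟨h1, h1'⟩ | ⟨h1, h1'⟩ <;>
    rcases abs_cases (x - b) with ⟨h2, h2'⟩ | ⟨h2, h2'⟩ <;> linarith

lemma vd_swap_le {t q : ℕ → ℝ} (ht0 : ∀ k, 0 ≤ t k) (ht : Summable t) (hq : Summable q)
    {i j : ℕ} (hij : i ≠ j) (htji : t j ≤ t i) (hqi : q i = 0) (hqj : 0 ≤ q j) :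
    vd (fun k => q (Equiv.swap i j k)) t ≤ vd q t := by
  have hq' : Summable (fun k => q (Equiv.swap i j k)) := by
    simpa [Function.comp_def] using ((Equiv.swap i j).summable_iff (f := q)).mpr hq
  have hfs : Summable (fun k => |q k - t k|) := (hq.sub ht).abs
  have hfs' : Summable (fun k => |q (Equiv.swap i j k) - t k|) := (hq'.sub ht).abs
  unfold vd
  rw [tsum_pair_split _ hfs' hij, tsum_pair_split _ hfs hij]
  have hq'i : q (Equiv.swap i j i) = q j := by rw [Equiv.swap_apply_left]
  have hq'j : q (Equiv.swap i j j) = q i := by rw [Equiv.swap_apply_right]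
  have hrest : (∑' k, if k = i ∨ k = j then 0 else |q (Equiv.swap i j k) - t k|)
      = ∑' k, if k = i ∨ k = j then 0 else |q k - t k| := by
    apply tsum_congr
    intro k
    by_cases h : k = i ∨ k = j
    · simp [h]
    · push_neg at h
      rw [Equiv.swap_apply_of_ne_of_ne h.1 h.2]
  rw [hrest, hq'i, hq'j, hqi]
  have e1 : |(0:ℝ) - t i| = t i := by rw [zero_sub, abs_neg, abs_of_nonneg (ht0 i)]
  have e2 : |(0:ℝ) - t j| = t j := by rw [zero_sub, abs_neg, abs_of_nonneg (ht0 j)]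
  rw [e1, e2]
  have key := abs_swap_ineq (a := t i) (b := t j) (x := q j) (ht0 j) htji hqj
  linarith

lemma mtype_nonneg {M : ℕ} {q : ℕ → ℝ} (hq : IsMType M q) (k : ℕ) : 0 ≤ q k := by
  obtain ⟨_, c, _, hc⟩ := hq
  rw [hc]
  positivity

lemma mtype_ge {M : ℕ} {q : ℕ → ℝ} (hM : 0 < M) (hq : IsMType M q) {k : ℕ} (h : q k ≠ 0) :
    1 / (M : ℝ) ≤ q k := by
  obtain ⟨_, c, _, hc⟩ := hq
  rw [hc] at h ⊢
  have hc0 : c k ≠ 0 := by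
    intro h0
    simp [h0] at h
  have h1 : (1 : ℝ) ≤ (c k : ℝ) := by exact_mod_cast Nat.one_le_iff_ne_zero.mpr hc0
  gcongr

lemma mtype_swap {M : ℕ} {q : ℕ → ℝ} (hq : IsMType M q) (i j : ℕ) :
    IsMType M (fun k => q (Equiv.swap i j k)) := by
  obtain ⟨hsum, c, hcle, hc⟩ := hq
  refine ⟨?_, fun k => c (Equiv.swap i j k), fun k => hcle _, fun k => hc _⟩
  simpa [Function.comp_def] using ((Equiv.swap i j).hasSum_iff (f := q) (a := 1)).mpr hsum

lemma mtype_exists_zero {M : ℕ} {q : ℕ → ℝ} (hM : 0 < M) (hq : IsMType M q) {j : ℕ}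
    (hjM : M ≤ j) (hqj : q j ≠ 0) : ∃ i, i < M ∧ q i = 0 := by
  by_contra h
  push_neg at h
  have hle : ∀ k ∈ insert j (Finset.range M), 1 / (M : ℝ) ≤ q k := by
    intro k hk
    rcases Finset.mem_insert.mp hk with rfl | hk
    · exact mtype_ge hM hq hqj
    · exact mtype_ge hM hq (h k (Finset.mem_range.mp hk))
  have hcard : (insert j (Finset.range M)).card = M + 1 := by
    rw [Finset.card_insert_of_notMem (by simp; omega), Finset.card_range]
  have h1 : ((M : ℝ) + 1) * (1 / M) ≤ ∑ k ∈ insert j (Finset.range M), q k := by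
    have := Finset.card_nsmul_le_sum (insert j (Finset.range M)) q (1 / (M : ℝ)) hle
    rw [hcard] at this
    rw [nsmul_eq_mul] at this
    push_cast at this
    linarith
  have h2 : ∑ k ∈ insert j (Finset.range M), q k ≤ 1 := by
    have := hq.1.summable.sum_le_tsum (insert j (Finset.range M)) (fun k _ => mtype_nonneg hq k)
    rwa [hq.1.tsum_eq] at this
  have hMr : (0 : ℝ) < M := by exact_mod_cast hM
  have : (1 : ℝ) < ((M : ℝ) + 1) * (1 / M) := by
    rw [mul_one_div, lt_div_iff₀ hMr]
    linarith
  linarith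

lemma mtype_bad_finite {M : ℕ} {q : ℕ → ℝ} (hM : 0 < M) (hq : IsMType M q) :
    {k | M ≤ k ∧ q k ≠ 0}.Finite := by
  have h0 : Filter.Tendsto q Filter.cofinite (nhds 0) := hq.1.summable.tendsto_cofinite_zero
  have hev : ∀ᶠ k in Filter.cofinite, q k < 1 / M :=
    h0.eventually (eventually_lt_nhds (by positivity))
  have hfin : {k | ¬ q k < 1 / (M : ℝ)}.Finite := Filter.eventually_cofinite.mp hev
  apply hfin.subset
  intro k hk
  simp only [Set.mem_setOf_eq, not_lt]
  exact mtype_ge hM hq hk.2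

/-- there exists a variational-distance optimal `M`-type approximation
`p` of `t` such that `t_j < t_i` and `p_i = 0` imply `p_j = 0`. -/
theorem stmt3 (t : ℕ → ℝ) (ht : IsTargetDist t) (M : ℕ) (hM : 0 < M) :
    ∃ p : ℕ → ℝ, IsMType M p ∧ (∀ q, IsMType M q → vd p t ≤ vd q t) ∧
      ∀ i j, t j < t i → p i = 0 → p j = 0 := by
  classical
  obtain ⟨ht0, htmono, htsum⟩ := ht
  have hanti : Antitone t := antitone_nat_of_succ_le htmono
  have htS : Summable t := htsum.summable
  set G : Set (ℕ → ℝ) := {p | IsMType M p ∧ ∀ k, M ≤ k → p k = 0} with hGdef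
  have hGfin : G.Finite := by
    have hsub : G ⊆ Set.range
        (fun (c : Fin M → Fin (M + 1)) (k : ℕ) =>
          if h : k < M then ((c ⟨k, h⟩ : ℕ) : ℝ) / M else 0) := by
      rintro p ⟨⟨hsum, c, hcle, hc⟩, hzero⟩
      refine ⟨fun i => ⟨c i, Nat.lt_succ_of_le (hcle i)⟩, ?_⟩
      funext k
      by_cases h : k < M
      · simp only [h, dif_pos]
        exact (hc k).symm
      · simp only [h, dif_neg, not_false_iff]
        exact (hzero k (le_of_not_gt h)).symm
    exact (Set.finite_range _).subset hsub
  have hGne : G.Nonempty := by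
    refine ⟨fun k => if k = 0 then 1 else 0,
      ⟨hasSum_ite_eq 0 1, fun k => if k = 0 then M else 0, ?_, ?_⟩, ?_⟩
    · intro k; by_cases h : k = 0 <;> simp [h]
    · intro k
      by_cases h : k = 0 <;> simp [h]
      field_simp
    · intro k hk
      have : k ≠ 0 := by omega
      simp [this]
  obtain ⟨p₁, hp₁G, hp₁min⟩ := hGfin.toFinset.exists_min_image (fun p => vd p t)
    (by rwa [Set.Finite.toFinset_nonempty])
  rw [Set.Finite.mem_toFinset] at hp₁G
  replace hp₁min : ∀ p ∈ G, vd p₁ t ≤ vd p t := fun p hp =>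
    hp₁min p (by rwa [Set.Finite.mem_toFinset])
  set G2 : Set (ℕ → ℝ) := {p | p ∈ G ∧ vd p t ≤ vd p₁ t} with hG2def
  have hG2fin : G2.Finite := hGfin.subset fun p hp => hp.1
  have hG2ne : G2.Nonempty := ⟨p₁, hp₁G, le_refl _⟩
  set μ : (ℕ → ℝ) → ℕ := fun p => ∑ k ∈ Finset.range M, if p k = 0 then 0 else k with hμdef
  obtain ⟨p, hpG2, hpmin⟩ := hG2fin.toFinset.exists_min_image μ
    (by rwa [Set.Finite.toFinset_nonempty])
  rw [Set.Finite.mem_toFinset] at hpG2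
  replace hpmin : ∀ q ∈ G2, μ p ≤ μ q := fun q hq =>
    hpmin q (by rwa [Set.Finite.mem_toFinset])
  have hpG : p ∈ G := hpG2.1
  have hpM : IsMType M p := hpG.1
  have base : ∀ q, IsMType M q → (∀ k, M ≤ k → q k = 0) → vd p t ≤ vd q t :=
    fun q hq h0 => le_trans hpG2.2 (hp₁min q ⟨hq, h0⟩)
  have hmin : ∀ q, IsMType M q → vd p t ≤ vd q t := by
    have key : ∀ n q, IsMType M q → {k | M ≤ k ∧ q k ≠ 0}.ncard ≤ n → vd p t ≤ vd q t := by
      intro n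
      induction n with
      | zero =>
        intro q hq hcard
        apply base q hq
        intro k hk
        by_contra hne
        have hmem : k ∈ {k | M ≤ k ∧ q k ≠ 0} := ⟨hk, hne⟩
        have hempty := (Set.ncard_eq_zero (mtype_bad_finite hM hq)).mp (Nat.le_zero.mp hcard)
        rw [hempty] at hmem
        exact hmem
      | succ n ih =>
        intro q hq hcard
        by_cases hB : {k | M ≤ k ∧ q k ≠ 0} = ∅
        · apply base q hq
          intro k hk
          by_contra hne
          have hmem : k ∈ {k | M ≤ k ∧ q k ≠ 0} := ⟨hk, hne⟩
          rw [hB] at hmem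
          exact hmem
        · obtain ⟨j, hjmem⟩ := Set.nonempty_iff_ne_empty.mpr hB
          obtain ⟨hjM, hqj⟩ := hjmem
          obtain ⟨i, hiM, hqi⟩ := mtype_exists_zero hM hq hjM hqj
          have hij : i ≠ j := by omega
          have hq'M : IsMType M (fun k => q (Equiv.swap i j k)) := mtype_swap hq i j
          have hvd : vd (fun k => q (Equiv.swap i j k)) t ≤ vd q t :=
            vd_swap_le ht0 htS hq.1.summable hij (hanti (by omega : i ≤ j)) hqi
              (mtype_nonneg hq j)
          have hBq' : {k | M ≤ k ∧ (fun k => q (Equiv.swap i j k)) k ≠ 0}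
              = {k | M ≤ k ∧ q k ≠ 0} \ {j} := by
            ext k
            simp only [Set.mem_setOf_eq, Set.mem_diff, Set.mem_singleton_iff]
            by_cases hki : k = i
            · subst hki
              constructor
              · rintro ⟨h', _⟩; omega
              · rintro ⟨⟨h', _⟩, _⟩; omega
            · by_cases hkj : k = j
              · subst hkj
                rw [Equiv.swap_apply_right]
                simp [hqi]
              · rw [Equiv.swap_apply_of_ne_of_ne hki hkj]
                tauto
          refine le_trans (ih _ hq'M ?_) hvd
          rw [hBq']
          have hlt := Set.ncard_diff_singleton_lt_of_mem
            (show j ∈ {k | M ≤ k ∧ q k ≠ 0} from ⟨hjM, hqj⟩) (mtype_bad_finite hM hq)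
          omega
    intro q hq
    exact key _ q hq le_rfl
  refine ⟨p, hpM, hmin, ?_⟩
  intro i j htji hpi
  by_contra hpj
  have hjM : j < M := by
    by_contra h
    exact hpj (hpG.2 j (le_of_not_gt h))
  have hijlt : i < j := by
    by_contra h
    have : t i ≤ t j := hanti (le_of_not_gt h)
    linarith
  have hij : i ≠ j := Nat.ne_of_lt hijlt
  have hq'M : IsMType M (fun k => p (Equiv.swap i j k)) := mtype_swap hpM i j
  have hq'G : (fun k => p (Equiv.swap i j k)) ∈ G := by
    refine ⟨hq'M, fun k hk => ?_⟩
    have hki : k ≠ i := by omega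
    have hkj : k ≠ j := by omega
    show p (Equiv.swap i j k) = 0
    rw [Equiv.swap_apply_of_ne_of_ne hki hkj]
    exact hpG.2 k hk
  have hvd : vd (fun k => p (Equiv.swap i j k)) t ≤ vd p t :=
    vd_swap_le ht0 htS hpM.1.summable hij (le_of_lt htji) hpi (mtype_nonneg hpM j)
  have hq'G2 : (fun k => p (Equiv.swap i j k)) ∈ G2 := ⟨hq'G, le_trans hvd hpG2.2⟩
  have hμlt : μ (fun k => p (Equiv.swap i j k)) < μ p := by
    have hi : i ∈ Finset.range M := Finset.mem_range.mpr (by omega)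
    have hj : j ∈ Finset.range M := Finset.mem_range.mpr hjM
    rw [hμdef]
    simp only
    rw [sum_pair_split _ _ hi hj hij, sum_pair_split _ _ hi hj hij]
    simp only [Equiv.swap_apply_left, Equiv.swap_apply_right]
    rw [if_neg hpj, if_pos hpi, if_pos hpi, if_neg hpj]
    have hrest : ∑ k ∈ ((Finset.range M).erase i).erase j,
        (if p (Equiv.swap i j k) = 0 then 0 else k)
        = ∑ k ∈ ((Finset.range M).erase i).erase j, (if p k = 0 then 0 else k) := by
      apply Finset.sum_congr rfl
      intro k hk
      have hkj : k ≠ j := (Finset.mem_erase.mp hk).1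
      have hki : k ≠ i := (Finset.mem_erase.mp (Finset.mem_erase.mp hk).2).1
      rw [Equiv.swap_apply_of_ne_of_ne hki hkj]
    rw [hrest]
    omega
  exact absurd (hpmin _ hq'G2) (Nat.not_le.mpr hμlt)
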